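/- Let A₁, A₂ : ℝ → ℂ solve i A₁' = |A₂|²A₂, i A₂' = |A₁|²A₁, and set ρ± = |A₁|² ± |A₂|², I = 2Im(conj(A₁)A₂). Then ρ₊' = -I ρ₋, ρ₋' = I ρ₊, and I' = -2ρ₊ρ₋. -/

import Mathlib

private lemma hre' {f : ℝ → ℂ} {f' : ℂ} {t : ℝ} (h : HasDerivAt f f' t) :
    HasDerivAt (fun t => (f t).re) f'.re t :=
  Complex.reCLM.hasFDerivAt.comp_hasDerivAt t h

private lemma him' {f : ℝ → ℂ} {f' : ℂ} {t : ℝ} (h : HasDerivAt f f' t) :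
    HasDerivAt (fun t => (f t).im) f'.im t :=
  Complex.imCLM.hasFDerivAt.comp_hasDerivAt t h

theorem stmt12 (A₁ A₂ A₁' A₂' : ℝ → ℂ)
    (hd₁ : ∀ t, HasDerivAt A₁ (A₁' t) t)
    (hd₂ : ∀ t, HasDerivAt A₂ (A₂' t) t)
    (hode₁ : ∀ t, Complex.I * A₁' t = (Complex.normSq (A₂ t) : ℂ) * A₂ t)
    (hode₂ : ∀ t, Complex.I * A₂' t = (Complex.normSq (A₁ t) : ℂ) * A₁ t) :
    let ρp : ℝ → ℝ := fun t => Complex.normSq (A₁ t) + Complex.normSq (A₂ t)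
    let ρm : ℝ → ℝ := fun t => Complex.normSq (A₁ t) - Complex.normSq (A₂ t)
    let I : ℝ → ℝ := fun t => 2 * ((starRingEnd ℂ) (A₁ t) * A₂ t).im
    ∀ t : ℝ,
      HasDerivAt ρp (-(I t) * ρm t) t ∧
      HasDerivAt ρm (I t * ρp t) t ∧
      HasDerivAt I (-2 * ρp t * ρm t) t := by
  intro ρp ρm I t
  have hra := hre' (hd₁ t); have hia := him' (hd₁ t)
  have hrc := hre' (hd₂ t); have hic := him' (hd₂ t)
  have e1 : -(A₁' t).im = ((A₂ t).re * (A₂ t).re + (A₂ t).im * (A₂ t).im) * (A₂ t).re ∧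
      (A₁' t).re = ((A₂ t).re * (A₂ t).re + (A₂ t).im * (A₂ t).im) * (A₂ t).im := by
    have h := hode₁ t
    rw [Complex.ext_iff] at h
    simpa [Complex.normSq_apply] using h
  have e2 : -(A₂' t).im = ((A₁ t).re * (A₁ t).re + (A₁ t).im * (A₁ t).im) * (A₁ t).re ∧
      (A₂' t).re = ((A₁ t).re * (A₁ t).re + (A₁ t).im * (A₁ t).im) * (A₁ t).im := by
    have h := hode₂ t
    rw [Complex.ext_iff] at h
    simpa [Complex.normSq_apply] using h
  have hb1 : (A₁' t).im = -(((A₂ t).re * (A₂ t).re + (A₂ t).im * (A₂ t).im) * (A₂ t).re) := by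
    linarith [e1.1]
  have hb2 : (A₂' t).im = -(((A₁ t).re * (A₁ t).re + (A₁ t).im * (A₁ t).im) * (A₁ t).re) := by
    linarith [e2.1]
  refine ⟨?_, ?_, ?_⟩
  · have H := ((hra.mul hra).add (hia.mul hia)).add ((hrc.mul hrc).add (hic.mul hic))
    simp only [ρp, ρm, I, Complex.normSq_apply, Complex.mul_im, Complex.conj_re,
      Complex.conj_im]
    refine H.congr_deriv ?_
    rw [e1.2, hb1, e2.2, hb2]; ring
  · have H := ((hra.mul hra).add (hia.mul hia)).sub ((hrc.mul hrc).add (hic.mul hic))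
    simp only [ρp, ρm, I, Complex.normSq_apply, Complex.mul_im, Complex.conj_re,
      Complex.conj_im]
    refine H.congr_deriv ?_
    rw [e1.2, hb1, e2.2, hb2]; ring
  · have H := ((hra.mul hic).add ((hia.neg).mul hrc)).const_mul (2:ℝ)
    simp only [ρp, ρm, I, Complex.normSq_apply, Complex.mul_im, Complex.conj_re,
      Complex.conj_im]
    refine H.congr_deriv ?_
    rw [e1.2, hb1, e2.2, hb2, Pi.neg_apply]; ring
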